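/- Let β : ℕ → ℝ satisfy 0 < β_i < 1 for all i ≥ 1, let ᾱ_t = ∏_{i=1}^{t} (1 − β_i), and fix two distinct clean values a ≠ b in ℝ. For t ≥ 1, the KL divergence between the forward-process marginals of the two samples at time t satisfies KL(N(√ᾱ_t · a, 1 − ᾱ_t) ‖ N(√ᾱ_t · b, 1 − ᾱ_t)) = ᾱ_t · (a − b)² / (2(1 − ᾱ_t)) (as an extended nonnegative real, the right-hand side under ENNReal.ofReal), and this quantity is strictly decreasing in t: for all t ≥ 1, the divergence at time t + 1 is strictly less than the divergence at time t. -/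

import Mathlib

open MeasureTheory ProbabilityTheory Real Finset
open scoped ENNReal NNReal Classical

/-- Kullback–Leibler divergence of `μ` from `ν`: the integral of the
log-likelihood ratio `log (dμ/dν)` with respect to `μ` when `μ ≪ ν` (and the
integral is well defined), and `∞` otherwise. -/
noncomputable def klDiv {α : Type*} [MeasurableSpace α] (μ ν : Measure α) : ℝ≥0∞ :=
  if μ ≪ ν ∧ Integrable (llr μ ν) μ then ENNReal.ofReal (∫ x, llr μ ν x ∂μ) else ∞

lemma log_pdf_ratio (μ₁ μ₂ : ℝ) (v : ℝ≥0) (hv : v ≠ 0) (x : ℝ) :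
    Real.log (gaussianPDFReal μ₁ v x / gaussianPDFReal μ₂ v x)
      = (μ₁ - μ₂) / v * (x - μ₁) + (μ₁ - μ₂) ^ 2 / (2 * v) := by
  have hV : (0 : ℝ) < v := lt_of_le_of_ne (v.coe_nonneg) (by exact_mod_cast (Ne.symm hv))
  have hc : (Real.sqrt (2 * π * v))⁻¹ ≠ 0 := by positivity
  rw [gaussianPDFReal, gaussianPDFReal, mul_div_mul_left _ _ hc, ← Real.exp_sub, Real.log_exp]
  field_simp
  ring

lemma integrable_id_mul_pdf (v : ℝ≥0) (hv : v ≠ 0) :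
    Integrable (fun y : ℝ => y * gaussianPDFReal 0 v y) := by
  have hV : (0 : ℝ) < v := lt_of_le_of_ne (v.coe_nonneg) (by exact_mod_cast (Ne.symm hv))
  have hb : (0 : ℝ) < (2 * (v : ℝ))⁻¹ := by positivity
  have h := (integrable_mul_exp_neg_mul_sq hb).const_mul (Real.sqrt (2 * π * (v : ℝ)))⁻¹
  refine h.congr ?_
  filter_upwards with y
  rw [gaussianPDFReal]
  rw [show -(y - 0) ^ 2 / (2 * (v : ℝ)) = -(2 * (v : ℝ))⁻¹ * y ^ 2 by rw [sub_zero]; ring]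
  ring

lemma integral_id_mul_pdf (v : ℝ≥0) :
    ∫ y : ℝ, y * gaussianPDFReal 0 v y = 0 := by
  have hodd : ∀ y : ℝ, (-y) * gaussianPDFReal 0 v (-y) = -(y * gaussianPDFReal 0 v y) := by
    intro y
    rw [gaussianPDFReal, gaussianPDFReal]
    ring_nf
  have h := integral_neg_eq_self (fun y : ℝ => y * gaussianPDFReal 0 v y) volume
  simp only [hodd, integral_neg] at h
  linarith

lemma klDiv_gaussian_same_var (μ₁ μ₂ : ℝ) (v : ℝ≥0) (hv : v ≠ 0) :
    klDiv (gaussianReal μ₁ v) (gaussianReal μ₂ v)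
      = ENNReal.ofReal ((μ₁ - μ₂) ^ 2 / (2 * v)) := by
  have hV : (0 : ℝ) < v := lt_of_le_of_ne (v.coe_nonneg) (by exact_mod_cast (Ne.symm hv))
  set μ := gaussianReal μ₁ v with hμdef
  set ν := gaussianReal μ₂ v with hνdef
  have hac : μ ≪ ν :=
    (gaussianReal_absolutelyContinuous μ₁ hv).trans (gaussianReal_absolutelyContinuous' μ₂ hv)
  have hmeas_ratio : Measurable fun x => gaussianPDF μ₁ v x / gaussianPDF μ₂ v x :=
    (measurable_gaussianPDF μ₁ v).div (measurable_gaussianPDF μ₂ v)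
  have h1 : ν.withDensity (fun x => gaussianPDF μ₁ v x / gaussianPDF μ₂ v x) = μ := by
    rw [show ν = volume.withDensity (gaussianPDF μ₂ v) from gaussianReal_of_var_ne_zero _ hv,
      ← withDensity_mul _ (measurable_gaussianPDF μ₂ v) hmeas_ratio]
    rw [show μ = volume.withDensity (gaussianPDF μ₁ v) from gaussianReal_of_var_ne_zero _ hv]
    congr 1
    funext x
    simp only [Pi.mul_apply]
    exact ENNReal.mul_div_cancel' (fun h => absurd h (gaussianPDF_pos _ hv x).ne') (fun h => absurd h ENNReal.ofReal_ne_top)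
  have hrn : μ.rnDeriv ν =ᵐ[ν] fun x => gaussianPDF μ₁ v x / gaussianPDF μ₂ v x := by
    rw [← h1]
    exact Measure.rnDeriv_withDensity ν hmeas_ratio
  have hrnμ : μ.rnDeriv ν =ᵐ[μ] fun x => gaussianPDF μ₁ v x / gaussianPDF μ₂ v x :=
    hac.ae_eq hrn
  set L : ℝ → ℝ := fun x => (μ₁ - μ₂) / v * (x - μ₁) + (μ₁ - μ₂) ^ 2 / (2 * v) with hLdef
  have hllr : llr μ ν =ᵐ[μ] L := by
    filter_upwards [hrnμ] with x hx
    rw [llr, hx]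
    have h2 : (gaussianPDF μ₁ v x / gaussianPDF μ₂ v x).toReal
        = gaussianPDFReal μ₁ v x / gaussianPDFReal μ₂ v x := by
      rw [ENNReal.toReal_div, gaussianPDF, gaussianPDF,
        ENNReal.toReal_ofReal (gaussianPDFReal_nonneg _ _ _),
        ENNReal.toReal_ofReal (gaussianPDFReal_nonneg _ _ _)]
    rw [h2, log_pdf_ratio μ₁ μ₂ v hv x]
  -- integrability / integral of the affine function wrt μ
  have hμ_eq : μ = volume.withDensity
      (fun x => ((gaussianPDFReal μ₁ v x).toNNReal : ℝ≥0∞)) :=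
    gaussianReal_of_var_ne_zero _ hv
  have hfmeas : Measurable fun x => (gaussianPDFReal μ₁ v x).toNNReal :=
    (measurable_gaussianPDFReal μ₁ v).real_toNNReal
  have hsmul_eq : ∀ (g : ℝ → ℝ), (fun x => (gaussianPDFReal μ₁ v x).toNNReal • g x)
      = fun x => gaussianPDFReal μ₁ v x * g x := by
    intro g
    funext x
    rw [NNReal.smul_def, Real.coe_toNNReal _ (gaussianPDFReal_nonneg _ _ _), smul_eq_mul]
  -- integrability of (x - μ₁) wrt μ
  have hint_vol : Integrable (fun x : ℝ => gaussianPDFReal μ₁ v x * (x - μ₁)) := by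
    have h := (integrable_id_mul_pdf v hv).comp_sub_right μ₁
    refine h.congr ?_
    filter_upwards with x
    have : gaussianPDFReal 0 v (x - μ₁) = gaussianPDFReal μ₁ v x := by
      rw [gaussianPDFReal_sub, zero_add]
    rw [this]
    ring
  have hint_sub : Integrable (fun x : ℝ => x - μ₁) μ := by
    rw [hμ_eq, integrable_withDensity_iff_integrable_smul hfmeas, hsmul_eq]
    exact hint_vol
  have hintL : Integrable L μ := by
    refine Integrable.add (hint_sub.const_mul _) (integrable_const _)
  have hint : Integrable (llr μ ν) μ := hintL.congr hllr.symm
  -- the integral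
  have hI_sub : ∫ x, (x - μ₁) ∂μ = 0 := by
    rw [hμ_eq, integral_withDensity_eq_integral_smul hfmeas, hsmul_eq]
    have h := integral_id_mul_pdf v
    rw [← integral_sub_right_eq_self (fun y : ℝ => y * gaussianPDFReal 0 v y) μ₁] at h
    rw [← h]
    congr 1
    funext x
    have : gaussianPDFReal 0 v (x - μ₁) = gaussianPDFReal μ₁ v x := by
      rw [gaussianPDFReal_sub, zero_add]
    rw [this]
    ring
  have hIL : ∫ x, L x ∂μ = (μ₁ - μ₂) ^ 2 / (2 * v) := by
    rw [hLdef]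
    rw [integral_add (hint_sub.const_mul _) (integrable_const _),
      integral_const_mul, hI_sub, mul_zero, zero_add, integral_const]
    simp
  rw [klDiv, if_pos ⟨hac, hint⟩, integral_congr_ae hllr, hIL]

/-- **The KL divergence between the forward-process marginals of two distinct
clean samples decreases strictly with the timestep.** With `ᾱ_t = ∏_{i=1}^{t} (1 − β_i)`,
`0 < β_i < 1`, and `a ≠ b`, for every `t ≥ 1`,
`KL(N(√ᾱ_t a, 1 − ᾱ_t) ‖ N(√ᾱ_t b, 1 − ᾱ_t)) = ᾱ_t (a − b)² / (2(1 − ᾱ_t))`,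
and this KL divergence at time `t + 1` is strictly smaller than at time `t`. -/
theorem klDiv_forward_marginals_strict_anti
    (β : ℕ → ℝ) (hβ : ∀ i, 1 ≤ i → 0 < β i ∧ β i < 1)
    (ᾱ : ℕ → ℝ) (hᾱ : ∀ t, ᾱ t = ∏ i ∈ Finset.Icc 1 t, (1 - β i))
    (a b : ℝ) (hab : a ≠ b) :
    (∀ t, 1 ≤ t →
      klDiv (gaussianReal (Real.sqrt (ᾱ t) * a) (1 - ᾱ t).toNNReal)
          (gaussianReal (Real.sqrt (ᾱ t) * b) (1 - ᾱ t).toNNReal)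
        = ENNReal.ofReal (ᾱ t * (a - b) ^ 2 / (2 * (1 - ᾱ t)))) ∧
    (∀ t, 1 ≤ t →
      klDiv (gaussianReal (Real.sqrt (ᾱ (t + 1)) * a) (1 - ᾱ (t + 1)).toNNReal)
          (gaussianReal (Real.sqrt (ᾱ (t + 1)) * b) (1 - ᾱ (t + 1)).toNNReal)
        < klDiv (gaussianReal (Real.sqrt (ᾱ t) * a) (1 - ᾱ t).toNNReal)
            (gaussianReal (Real.sqrt (ᾱ t) * b) (1 - ᾱ t).toNNReal)) := by
  -- basic bounds on ᾱ
  have hstep : ∀ t : ℕ, 1 ≤ t → ᾱ (t + 1) = ᾱ t * (1 - β (t + 1)) := by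
    intro t ht
    rw [hᾱ, hᾱ, Finset.prod_Icc_succ_top (by omega : 1 ≤ t + 1)]
  have hbounds : ∀ t : ℕ, 1 ≤ t → 0 < ᾱ t ∧ ᾱ t < 1 := by
    intro t ht
    induction t with
    | zero => omega
    | succ n ih =>
      rcases Nat.eq_or_lt_of_le ht with h1 | h1
      · have : ᾱ 1 = 1 - β 1 := by
          rw [hᾱ, Finset.Icc_self, Finset.prod_singleton]
        rw [← h1, this]
        have := hβ 1 le_rfl
        constructor <;> linarith [this.1, this.2]
      · have hn : 1 ≤ n := by omega
        obtain ⟨h0, h1'⟩ := ih hn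
        have hb := hβ (n + 1) (by omega)
        rw [hstep n hn]
        constructor
        · have : 0 < 1 - β (n + 1) := by linarith [hb.2]
          positivity
        · nlinarith [hb.1, hb.2]
  have hdec : ∀ t : ℕ, 1 ≤ t → ᾱ (t + 1) < ᾱ t := by
    intro t ht
    rw [hstep t ht]
    have h0 := (hbounds t ht).1
    have hb := hβ (t + 1) (by omega)
    nlinarith [hb.1, hb.2]
  -- formula at a given time
  have hformula : ∀ t : ℕ, 1 ≤ t →
      klDiv (gaussianReal (Real.sqrt (ᾱ t) * a) (1 - ᾱ t).toNNReal)
          (gaussianReal (Real.sqrt (ᾱ t) * b) (1 - ᾱ t).toNNReal)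
        = ENNReal.ofReal (ᾱ t * (a - b) ^ 2 / (2 * (1 - ᾱ t))) := by
    intro t ht
    obtain ⟨h0, h1⟩ := hbounds t ht
    have hvpos : (0 : ℝ) < 1 - ᾱ t := by linarith
    have hv : (1 - ᾱ t).toNNReal ≠ 0 := by
      simp only [ne_eq, Real.toNNReal_eq_zero, not_le]
      linarith
    rw [klDiv_gaussian_same_var _ _ _ hv]
    congr 1
    rw [Real.coe_toNNReal _ hvpos.le]
    have : Real.sqrt (ᾱ t) * a - Real.sqrt (ᾱ t) * b = Real.sqrt (ᾱ t) * (a - b) := by ring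
    rw [this, mul_pow, Real.sq_sqrt h0.le]
  refine ⟨hformula, fun t ht => ?_⟩
  have ht1 : 1 ≤ t + 1 := by omega
  rw [hformula t ht, hformula (t + 1) ht1]
  obtain ⟨h0, h1⟩ := hbounds t ht
  obtain ⟨h0', h1'⟩ := hbounds (t + 1) ht1
  have hlt := hdec t ht
  have hab2 : (0 : ℝ) < (a - b) ^ 2 := by
    have : a - b ≠ 0 := sub_ne_zero.mpr hab
    positivity
  rw [ENNReal.ofReal_lt_ofReal_iff (div_pos (mul_pos h0 hab2) (by linarith))]
  rw [div_lt_div_iff₀ (by linarith) (by linarith)]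
  nlinarith [mul_lt_mul_of_pos_left hlt hab2, mul_pos hab2 (mul_pos h0' (sub_pos.mpr h1))]
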